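/- Let χ₁, χ₂ be real Laurent polynomials with non-negative coefficients such that χ_i(1) = 1 and χ_i'(1) = 0 for i = 1,2, and with equal constant terms. Write χ_i(t) = χ_i^-(t) + c_i + χ_i^+(t) where χ_i^+ contains the positive-degree terms and χ_i^- the negative-degree terms. If there exist a, b > 0 with χ₁^+(t) = χ₂^+(a t) and χ₁^-(t) = χ₂^-(b t) for all t > 0, then χ₁ = χ₂ (and a = b = 1, provided χ₁^+ and χ₁^- are both nonzero). -/

import Mathlib

open Finset


private lemma poly_vanish (n : ℕ) (c : ℕ → ℝ)
    (h : ∀ t : ℝ, 0 < t → ∑ j ∈ Finset.range n, c j * t ^ j = 0) :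
    ∀ j ∈ Finset.range n, c j = 0 := by
  intro j hj
  set p : Polynomial ℝ := ∑ i ∈ Finset.range n, Polynomial.C (c i) * Polynomial.X ^ i with hp
  have heval : ∀ t : ℝ, p.eval t = ∑ i ∈ Finset.range n, c i * t ^ i := by
    intro t; simp [hp, Polynomial.eval_finset_sum]
  have hp0 : p = 0 := by
    apply Polynomial.eq_zero_of_infinite_isRoot
    apply Set.Infinite.mono (s := Set.Ioi (0 : ℝ)) ?_ (Set.Ioi_infinite 0)
    intro t ht
    simp only [Set.mem_setOf_eq, Polynomial.IsRoot, heval]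
    exact h t ht
  have hc := congrArg (fun q => Polynomial.coeff q j) hp0
  simp only [hp, Polynomial.finset_sum_coeff, Polynomial.coeff_C_mul,
    Polynomial.coeff_X_pow, Polynomial.coeff_zero, mul_ite, mul_one, mul_zero] at hc
  rwa [Finset.sum_ite_eq (Finset.range n) j c, if_pos hj] at hc

private lemma poly_vanish_Icc (n : ℕ) (c : ℕ → ℝ)
    (h : ∀ t : ℝ, 0 < t → ∑ j ∈ Finset.Icc 1 n, c j * t ^ j = 0) :
    ∀ j ∈ Finset.Icc 1 n, c j = 0 := by
  have key := poly_vanish (n + 1) (fun j => if j ∈ Finset.Icc 1 n then c j else 0) ?_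
  · intro j hj
    have hjr : j ∈ Finset.range (n + 1) := by
      simp only [Finset.mem_Icc] at hj; simp; omega
    simpa [hj] using key j hjr
  · intro t ht
    have hsub : Finset.Icc 1 n ⊆ Finset.range (n + 1) := by
      intro x hx; simp only [Finset.mem_Icc] at hx; simp; omega
    calc ∑ j ∈ Finset.range (n + 1), (if j ∈ Finset.Icc 1 n then c j else 0) * t ^ j
        = ∑ j ∈ Finset.Icc 1 n, (if j ∈ Finset.Icc 1 n then c j else 0) * t ^ j :=
          (Finset.sum_subset hsub (fun x _ hx' => by simp [hx'])).symm
      _ = ∑ j ∈ Finset.Icc 1 n, c j * t ^ j :=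
          Finset.sum_congr rfl (fun x hx => by rw [if_pos hx])
      _ = 0 := h t ht

private lemma sum_Icc_int_pos (m : ℕ) (h : ℤ → ℝ) :
    ∑ k ∈ Finset.Icc (1 : ℤ) (m : ℤ), h k = ∑ j ∈ Finset.Icc 1 m, h (j : ℤ) := by
  refine (Finset.sum_nbij' (fun j : ℕ => (j : ℤ)) (fun k : ℤ => k.toNat) ?_ ?_ ?_ ?_ ?_).symm
  · intro j hj; simp only [Finset.mem_Icc] at hj ⊢; omega
  · intro k hk; simp only [Finset.mem_Icc] at hk ⊢; omega
  · intro j _; simp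
  · intro k hk; simp only [Finset.mem_Icc] at hk; simp; omega
  · intro j _; rfl

private lemma sum_Icc_int_neg (m : ℕ) (h : ℤ → ℝ) :
    ∑ k ∈ Finset.Icc (-(m : ℤ)) (-1 : ℤ), h k = ∑ j ∈ Finset.Icc 1 m, h (-(j : ℤ)) := by
  refine (Finset.sum_nbij' (fun j : ℕ => -(j : ℤ)) (fun k : ℤ => (-k).toNat) ?_ ?_ ?_ ?_ ?_).symm
  · intro j hj; simp only [Finset.mem_Icc] at hj ⊢; omega
  · intro k hk; simp only [Finset.mem_Icc] at hk ⊢; omega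
  · intro j _; simp
  · intro k hk; simp only [Finset.mem_Icc] at hk; simp; omega
  · intro j _; rfl

private lemma deriv_sum_zpow (s : Finset ℤ) (κ : ℤ → ℝ) :
    deriv (fun t : ℝ => ∑ k ∈ s, κ k * t ^ k) 1 = ∑ k ∈ s, κ k * k := by
  have hd : ∀ k : ℤ, DifferentiableAt ℝ (fun t : ℝ => t ^ k) (1 : ℝ) := fun k =>
    differentiableAt_zpow.mpr (Or.inl one_ne_zero)
  rw [deriv_fun_sum (fun k _ => ((hd k).const_mul (κ k)))]
  refine Finset.sum_congr rfl fun k _ => ?_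
  rw [deriv_const_mul _ (hd k), deriv_zpow]
  simp

private lemma split_sum (e f : ℕ) (h : ℤ → ℝ) :
    ∑ k ∈ Finset.Icc (-(e : ℤ)) (f : ℤ), h k
      = ∑ k ∈ Finset.Icc (-(e : ℤ)) (-1 : ℤ), h k + h 0
        + ∑ k ∈ Finset.Icc (1 : ℤ) (f : ℤ), h k := by
  have h1 : Finset.Icc (-(e : ℤ)) (f : ℤ)
      = Finset.Icc (-(e : ℤ)) (-1 : ℤ) ∪ insert (0 : ℤ) (Finset.Icc (1 : ℤ) (f : ℤ)) := by
    ext k; simp only [Finset.mem_Icc, Finset.mem_union, Finset.mem_insert]; omega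
  have hdisj : Disjoint (Finset.Icc (-(e : ℤ)) (-1 : ℤ))
      (insert (0 : ℤ) (Finset.Icc (1 : ℤ) (f : ℤ))) := by
    rw [Finset.disjoint_left]
    intro k hk hk'
    simp only [Finset.mem_Icc] at hk
    simp only [Finset.mem_insert, Finset.mem_Icc] at hk'
    omega
  have h0 : (0 : ℤ) ∉ Finset.Icc (1 : ℤ) (f : ℤ) := by simp
  rw [h1, Finset.sum_union hdisj, Finset.sum_insert h0]
  ring


-- x ≥ 1 : ∑ w ≤ ∑ w x^j over Icc 1 n
private lemma sum_le_sum_pow {n : ℕ} {w : ℕ → ℝ} (hw : ∀ j, 0 ≤ w j) {x : ℝ} (hx : 1 ≤ x) :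
    ∑ j ∈ Icc 1 n, w j ≤ ∑ j ∈ Icc 1 n, w j * x ^ j :=
  Finset.sum_le_sum fun j _ => le_mul_of_one_le_right (hw j) (one_le_pow₀ hx)

private lemma sum_lt_sum_pow {n : ℕ} {w : ℕ → ℝ} (hw : ∀ j, 0 ≤ w j) {x : ℝ} (hx : 1 < x)
    {j₀ : ℕ} (hj₀ : j₀ ∈ Icc 1 n) (h0 : w j₀ ≠ 0) :
    ∑ j ∈ Icc 1 n, w j < ∑ j ∈ Icc 1 n, w j * x ^ j := by
  refine Finset.sum_lt_sum (fun j _ => le_mul_of_one_le_right (hw j) (one_le_pow₀ hx.le))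
    ⟨j₀, hj₀, ?_⟩
  have hw0 : 0 < w j₀ := lt_of_le_of_ne (hw j₀) (Ne.symm h0)
  have : (1 : ℝ) < x ^ j₀ := one_lt_pow₀ hx (by simp only [Finset.mem_Icc] at hj₀; omega)
  nlinarith

private lemma sum_pow_le_sum {n : ℕ} {w : ℕ → ℝ} (hw : ∀ j, 0 ≤ w j) {x : ℝ} (hx0 : 0 ≤ x)
    (hx : x ≤ 1) : ∑ j ∈ Icc 1 n, w j * x ^ j ≤ ∑ j ∈ Icc 1 n, w j :=
  Finset.sum_le_sum fun j _ => mul_le_of_le_one_right (hw j) (pow_le_one₀ hx0 hx)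

private lemma sum_pow_lt_sum {n : ℕ} {w : ℕ → ℝ} (hw : ∀ j, 0 ≤ w j) {x : ℝ} (hx0 : 0 ≤ x)
    (hx : x < 1) {j₀ : ℕ} (hj₀ : j₀ ∈ Icc 1 n) (h0 : w j₀ ≠ 0) :
    ∑ j ∈ Icc 1 n, w j * x ^ j < ∑ j ∈ Icc 1 n, w j := by
  refine Finset.sum_lt_sum (fun j _ => mul_le_of_le_one_right (hw j) (pow_le_one₀ hx0 hx.le))
    ⟨j₀, hj₀, ?_⟩
  have hw0 : 0 < w j₀ := lt_of_le_of_ne (hw j₀) (Ne.symm h0)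
  have : x ^ j₀ < 1 := pow_lt_one₀ hx0 hx (by simp only [Finset.mem_Icc] at hj₀; omega)
  nlinarith

-- moment comparisons
private lemma mom_ge {n : ℕ} {w : ℕ → ℝ} (hw : ∀ j, 0 ≤ w j) {x : ℝ} (hx : 1 ≤ x) :
    x * ∑ j ∈ Icc 1 n, (j : ℝ) * w j ≤ ∑ j ∈ Icc 1 n, (j : ℝ) * (w j * x ^ j) := by
  rw [Finset.mul_sum]
  refine Finset.sum_le_sum fun j hj => ?_
  have h1 : x ^ 1 ≤ x ^ j := pow_le_pow_right₀ hx (by simp only [Finset.mem_Icc] at hj; omega)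
  have hj0 : (0 : ℝ) ≤ (j : ℝ) * w j := mul_nonneg (by positivity) (hw j)
  calc x * ((j : ℝ) * w j) = (j : ℝ) * w j * x ^ 1 := by ring
    _ ≤ (j : ℝ) * w j * x ^ j := by gcongr
    _ = (j : ℝ) * (w j * x ^ j) := by ring

private lemma mom_le {n : ℕ} {w : ℕ → ℝ} (hw : ∀ j, 0 ≤ w j) {x : ℝ} (hx0 : 0 ≤ x)
    (hx : x ≤ 1) :
    ∑ j ∈ Icc 1 n, (j : ℝ) * (w j * x ^ j) ≤ x * ∑ j ∈ Icc 1 n, (j : ℝ) * w j := by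
  rw [Finset.mul_sum]
  refine Finset.sum_le_sum fun j hj => ?_
  have h1 : x ^ j ≤ x ^ 1 := pow_le_pow_of_le_one hx0 hx (by simp only [Finset.mem_Icc] at hj; omega)
  have hj0 : (0 : ℝ) ≤ (j : ℝ) * w j := mul_nonneg (by positivity) (hw j)
  calc (j : ℝ) * (w j * x ^ j) = (j : ℝ) * w j * x ^ j := by ring
    _ ≤ (j : ℝ) * w j * x ^ 1 := by gcongr
    _ = x * ((j : ℝ) * w j) := by ring

private lemma core_lemma (f e : ℕ) (β δ : ℕ → ℝ) (hβ : ∀ j, 0 ≤ β j) (hδ : ∀ j, 0 ≤ δ j)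
    (a b : ℝ) (ha : 0 < a) (hb : 0 < b)
    (hsum : ∑ j ∈ Icc 1 f, β j * a ^ j + ∑ j ∈ Icc 1 e, δ j * b ^ j
          = ∑ j ∈ Icc 1 f, β j + ∑ j ∈ Icc 1 e, δ j)
    (hmom : ∑ j ∈ Icc 1 f, (j : ℝ) * β j = ∑ j ∈ Icc 1 e, (j : ℝ) * δ j)
    (hmom' : ∑ j ∈ Icc 1 f, (j : ℝ) * (β j * a ^ j) = ∑ j ∈ Icc 1 e, (j : ℝ) * (δ j * b ^ j)) :
    (∀ j ∈ Icc 1 f, β j * a ^ j = β j) ∧ (∀ j ∈ Icc 1 e, δ j * b ^ j = δ j) ∧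
      ((∃ j ∈ Icc 1 f, β j ≠ 0) → (∃ j ∈ Icc 1 e, δ j ≠ 0) → a = 1 ∧ b = 1) := by
  by_cases hMA : ∑ j ∈ Icc 1 f, (j : ℝ) * β j = 0
  · -- degenerate case: everything vanishes
    have hβ0 : ∀ j ∈ Icc 1 f, β j = 0 := by
      intro j hj
      have := (Finset.sum_eq_zero_iff_of_nonneg
        (fun j _ => mul_nonneg (by positivity) (hβ j))).mp hMA j hj
      simp only [Finset.mem_Icc] at hj
      have hj' : (0:ℝ) < (j : ℝ) := by exact_mod_cast Nat.pos_of_ne_zero (by omega)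
      exact (mul_eq_zero.mp this).resolve_left (by positivity)
    have hδ0 : ∀ j ∈ Icc 1 e, δ j = 0 := by
      intro j hj
      have hMB : ∑ j ∈ Icc 1 e, (j : ℝ) * δ j = 0 := by rw [← hmom, hMA]
      have := (Finset.sum_eq_zero_iff_of_nonneg
        (fun j _ => mul_nonneg (by positivity) (hδ j))).mp hMB j hj
      simp only [Finset.mem_Icc] at hj
      have hj' : (0:ℝ) < (j : ℝ) := by exact_mod_cast Nat.pos_of_ne_zero (by omega)
      exact (mul_eq_zero.mp this).resolve_left (ne_of_gt hj')
    refine ⟨fun j hj => by rw [hβ0 j hj]; ring, fun j hj => by rw [hδ0 j hj]; ring, ?_⟩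
    rintro ⟨j, hj, hne⟩ _
    exact absurd (hβ0 j hj) hne
  · -- nondegenerate: moments positive, witnesses exist
    have hMApos : 0 < ∑ j ∈ Icc 1 f, (j : ℝ) * β j :=
      lt_of_le_of_ne (Finset.sum_nonneg fun j _ => mul_nonneg (by positivity) (hβ j))
        (Ne.symm hMA)
    have hMBpos : 0 < ∑ j ∈ Icc 1 e, (j : ℝ) * δ j := hmom ▸ hMApos
    obtain ⟨j₁, hj₁, hβ₁⟩ : ∃ j ∈ Icc 1 f, β j ≠ 0 := by
      by_contra hcon
      push_neg at hcon
      exact hMA (Finset.sum_eq_zero fun j hj => by rw [hcon j hj, mul_zero])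
    obtain ⟨j₂, hj₂, hδ₂⟩ : ∃ j ∈ Icc 1 e, δ j ≠ 0 := by
      by_contra hcon
      push_neg at hcon
      exact absurd (Finset.sum_eq_zero fun j hj => by rw [hcon j hj, mul_zero]) hMBpos.ne'
    have hab : a = 1 ∧ b = 1 := by
      rcases lt_trichotomy a 1 with hlt | heq | hgt
      · -- a < 1 leads to contradiction
        exfalso
        have h1 : ∑ j ∈ Icc 1 f, (j : ℝ) * (β j * a ^ j)
            < ∑ j ∈ Icc 1 f, (j : ℝ) * β j :=
          lt_of_le_of_lt (mom_le hβ ha.le hlt.le) (by nlinarith)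
        have hblt : b < 1 := by
          by_contra hble
          push_neg at hble
          have h2 := mom_ge hδ hble (n := e)
          nlinarith
        have h3 := sum_pow_lt_sum hβ ha.le hlt hj₁ hβ₁
        have h4 := sum_pow_lt_sum hδ hb.le hblt hj₂ hδ₂
        linarith
      · refine ⟨heq, ?_⟩
        subst heq
        have hA : ∑ j ∈ Icc 1 f, β j * 1 ^ j = ∑ j ∈ Icc 1 f, β j := by
          refine Finset.sum_congr rfl fun j _ => by rw [one_pow, mul_one]
        have hB : ∑ j ∈ Icc 1 e, δ j * b ^ j = ∑ j ∈ Icc 1 e, δ j := by linarith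
        rcases lt_trichotomy b 1 with hlt | heq' | hgt
        · exact absurd hB (ne_of_lt (sum_pow_lt_sum hδ hb.le hlt hj₂ hδ₂))
        · exact heq'
        · exact absurd hB (ne_of_gt (sum_lt_sum_pow hδ hgt hj₂ hδ₂))
      · -- a > 1 leads to contradiction
        exfalso
        have h1 : ∑ j ∈ Icc 1 f, (j : ℝ) * β j
            < ∑ j ∈ Icc 1 f, (j : ℝ) * (β j * a ^ j) :=
          lt_of_lt_of_le (by nlinarith) (mom_ge hβ hgt.le)
        have hbgt : 1 < b := by
          by_contra hble
          push_neg at hble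
          have h2 := mom_le hδ hb.le hble (n := e)
          nlinarith
        have h3 := sum_lt_sum_pow hβ hgt hj₁ hβ₁
        have h4 := sum_lt_sum_pow hδ hbgt hj₂ hδ₂
        linarith
    obtain ⟨ha1, hb1⟩ := hab
    subst ha1; subst hb1
    exact ⟨fun j _ => by rw [one_pow, mul_one], fun j _ => by rw [one_pow, mul_one],
      fun _ _ => ⟨rfl, rfl⟩⟩


/-- Proposition (scale rigidity): if `χ₁, χ₂` are Laurent polynomials with non-negative
coefficients, `χᵢ(1) = 1`, `χᵢ'(1) = 0`, equal constant terms, and the positive parts agree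
up to scaling by `a > 0` and the negative parts up to scaling by `b > 0`, then `χ₁ = χ₂`;
moreover `a = b = 1` provided the positive and negative parts are nonzero. -/
theorem char_eq_of_rescaled_parts (e f : ℕ) (κ₁ κ₂ : ℤ → ℝ)
    (hκ₁ : ∀ k, 0 ≤ κ₁ k) (hκ₂ : ∀ k, 0 ≤ κ₂ k)
    (hsupp₁ : ∀ k, κ₁ k ≠ 0 → k ∈ Finset.Icc (-(e : ℤ)) (f : ℤ))
    (hsupp₂ : ∀ k, κ₂ k ≠ 0 → k ∈ Finset.Icc (-(e : ℤ)) (f : ℤ))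
    (hsum₁ : ∑ k ∈ Finset.Icc (-(e : ℤ)) (f : ℤ), κ₁ k = 1)
    (hsum₂ : ∑ k ∈ Finset.Icc (-(e : ℤ)) (f : ℤ), κ₂ k = 1)
    (hderiv₁ :
      deriv (fun t : ℝ => ∑ k ∈ Finset.Icc (-(e : ℤ)) (f : ℤ), κ₁ k * t ^ k) 1 = 0)
    (hderiv₂ :
      deriv (fun t : ℝ => ∑ k ∈ Finset.Icc (-(e : ℤ)) (f : ℤ), κ₂ k * t ^ k) 1 = 0)
    (hconst : κ₁ 0 = κ₂ 0)
    (a b : ℝ) (ha : 0 < a) (hb : 0 < b)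
    (hplus : ∀ t : ℝ, 0 < t →
      ∑ k ∈ Finset.Icc (1 : ℤ) (f : ℤ), κ₁ k * t ^ k
        = ∑ k ∈ Finset.Icc (1 : ℤ) (f : ℤ), κ₂ k * (a * t) ^ k)
    (hminus : ∀ t : ℝ, 0 < t →
      ∑ k ∈ Finset.Icc (-(e : ℤ)) (-1 : ℤ), κ₁ k * t ^ k
        = ∑ k ∈ Finset.Icc (-(e : ℤ)) (-1 : ℤ), κ₂ k * (b * t) ^ k) :
    (∀ k, κ₁ k = κ₂ k) ∧
      ((∃ k, 1 ≤ k ∧ κ₁ k ≠ 0) → (∃ k, k ≤ -1 ∧ κ₁ k ≠ 0) → a = 1 ∧ b = 1) := by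
  have hb' : 0 < b⁻¹ := inv_pos.mpr hb
  -- moment identities from the derivative hypotheses
  have hm₁ : ∑ k ∈ Finset.Icc (-(e : ℤ)) (f : ℤ), κ₁ k * (k : ℝ) = 0 := by
    rw [← deriv_sum_zpow]; exact hderiv₁
  have hm₂ : ∑ k ∈ Finset.Icc (-(e : ℤ)) (f : ℤ), κ₂ k * (k : ℝ) = 0 := by
    rw [← deriv_sum_zpow]; exact hderiv₂
  -- coefficientwise relation, positive part
  have hA : ∀ j ∈ Finset.Icc 1 f, κ₁ (j : ℤ) = κ₂ (j : ℤ) * a ^ j := by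
    have key := poly_vanish_Icc f (fun j => κ₁ (j : ℤ) - κ₂ (j : ℤ) * a ^ j) ?_
    · intro j hj
      have := key j hj
      linarith [this]
    · intro t ht
      have h0 : ∑ k ∈ Finset.Icc (1 : ℤ) (f : ℤ), (κ₁ k - κ₂ k * a ^ k) * t ^ k = 0 := by
        have hp := hplus t ht
        simp only [sub_mul, Finset.sum_sub_distrib]
        rw [hp]
        rw [sub_eq_zero]
        refine Finset.sum_congr rfl fun k _ => ?_
        rw [mul_zpow]; ring
      rw [← h0, sum_Icc_int_pos f (fun k => (κ₁ k - κ₂ k * a ^ k) * t ^ k)]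
      refine Finset.sum_congr rfl fun j _ => ?_
      simp only [zpow_natCast]
  -- coefficientwise relation, negative part
  have hB : ∀ j ∈ Finset.Icc 1 e, κ₁ (-(j : ℤ)) = κ₂ (-(j : ℤ)) * b⁻¹ ^ j := by
    have key := poly_vanish_Icc e (fun j => κ₁ (-(j : ℤ)) - κ₂ (-(j : ℤ)) * b⁻¹ ^ j) ?_
    · intro j hj
      have := key j hj
      linarith [this]
    · intro s hs
      have ht : (0 : ℝ) < s⁻¹ := inv_pos.mpr hs
      have h0 : ∑ k ∈ Finset.Icc (-(e : ℤ)) (-1 : ℤ), (κ₁ k - κ₂ k * b ^ k) * (s⁻¹) ^ k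
          = 0 := by
        have hp := hminus s⁻¹ ht
        simp only [sub_mul, Finset.sum_sub_distrib]
        rw [hp, sub_eq_zero]
        refine Finset.sum_congr rfl fun k _ => ?_
        rw [mul_zpow]; ring
      rw [← h0, sum_Icc_int_neg e (fun k => (κ₁ k - κ₂ k * b ^ k) * (s⁻¹) ^ k)]
      refine Finset.sum_congr rfl fun j _ => ?_
      have h1 : (s⁻¹ : ℝ) ^ (-(j : ℤ)) = s ^ j := by
        rw [zpow_neg, ← inv_zpow, inv_inv, zpow_natCast]
      have h2 : (b : ℝ) ^ (-(j : ℤ)) = b⁻¹ ^ j := by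
        rw [zpow_neg, ← inv_zpow, zpow_natCast]
      rw [h1, h2]
  -- sums reindexed to ℕ
  have S₁ : ∑ j ∈ Finset.Icc 1 e, κ₁ (-(j : ℤ)) + κ₁ 0 + ∑ j ∈ Finset.Icc 1 f, κ₁ (j : ℤ)
      = 1 := by
    rw [← sum_Icc_int_neg e κ₁, ← sum_Icc_int_pos f κ₁, ← split_sum e f κ₁]
    exact hsum₁
  have S₂ : ∑ j ∈ Finset.Icc 1 e, κ₂ (-(j : ℤ)) + κ₂ 0 + ∑ j ∈ Finset.Icc 1 f, κ₂ (j : ℤ)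
      = 1 := by
    rw [← sum_Icc_int_neg e κ₂, ← sum_Icc_int_pos f κ₂, ← split_sum e f κ₂]
    exact hsum₂
  -- moments reindexed to ℕ
  have M₁ : ∑ j ∈ Finset.Icc 1 f, (j : ℝ) * κ₁ (j : ℤ)
      = ∑ j ∈ Finset.Icc 1 e, (j : ℝ) * κ₁ (-(j : ℤ)) := by
    have h := hm₁
    rw [split_sum e f (fun k => κ₁ k * (k : ℝ)),
      sum_Icc_int_neg e (fun k => κ₁ k * (k : ℝ)),
      sum_Icc_int_pos f (fun k => κ₁ k * (k : ℝ))] at h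
    simp only [Int.cast_neg, Int.cast_natCast, Int.cast_zero, mul_zero, add_zero,
      mul_neg] at h
    have h' : -∑ j ∈ Finset.Icc 1 e, κ₁ (-(j : ℤ)) * (j : ℝ)
        + ∑ j ∈ Finset.Icc 1 f, κ₁ (j : ℤ) * (j : ℝ) = 0 := by
      rw [Finset.sum_neg_distrib] at h
      exact h
    have := h'
    rw [neg_add_eq_zero] at this
    calc ∑ j ∈ Finset.Icc 1 f, (j : ℝ) * κ₁ (j : ℤ)
        = ∑ j ∈ Finset.Icc 1 f, κ₁ (j : ℤ) * (j : ℝ) :=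
          Finset.sum_congr rfl fun j _ => mul_comm _ _
      _ = ∑ j ∈ Finset.Icc 1 e, κ₁ (-(j : ℤ)) * (j : ℝ) := this.symm
      _ = ∑ j ∈ Finset.Icc 1 e, (j : ℝ) * κ₁ (-(j : ℤ)) :=
          Finset.sum_congr rfl fun j _ => mul_comm _ _
  have M₂ : ∑ j ∈ Finset.Icc 1 f, (j : ℝ) * κ₂ (j : ℤ)
      = ∑ j ∈ Finset.Icc 1 e, (j : ℝ) * κ₂ (-(j : ℤ)) := by
    have h := hm₂
    rw [split_sum e f (fun k => κ₂ k * (k : ℝ)),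
      sum_Icc_int_neg e (fun k => κ₂ k * (k : ℝ)),
      sum_Icc_int_pos f (fun k => κ₂ k * (k : ℝ))] at h
    simp only [Int.cast_neg, Int.cast_natCast, Int.cast_zero, mul_zero, add_zero,
      mul_neg] at h
    have h' : -∑ j ∈ Finset.Icc 1 e, κ₂ (-(j : ℤ)) * (j : ℝ)
        + ∑ j ∈ Finset.Icc 1 f, κ₂ (j : ℤ) * (j : ℝ) = 0 := by
      rw [Finset.sum_neg_distrib] at h
      exact h
    rw [neg_add_eq_zero] at h'
    calc ∑ j ∈ Finset.Icc 1 f, (j : ℝ) * κ₂ (j : ℤ)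
        = ∑ j ∈ Finset.Icc 1 f, κ₂ (j : ℤ) * (j : ℝ) :=
          Finset.sum_congr rfl fun j _ => mul_comm _ _
      _ = ∑ j ∈ Finset.Icc 1 e, κ₂ (-(j : ℤ)) * (j : ℝ) := h'.symm
      _ = ∑ j ∈ Finset.Icc 1 e, (j : ℝ) * κ₂ (-(j : ℤ)) :=
          Finset.sum_congr rfl fun j _ => mul_comm _ _
  -- apply the core rigidity lemma with β j = κ₂ j, δ j = κ₂ (-j), scales a and b⁻¹
  have hsumP₁ : ∑ j ∈ Finset.Icc 1 f, κ₁ (j : ℤ)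
      = ∑ j ∈ Finset.Icc 1 f, κ₂ (j : ℤ) * a ^ j :=
    Finset.sum_congr rfl fun j hj => hA j hj
  have hsumN₁ : ∑ j ∈ Finset.Icc 1 e, κ₁ (-(j : ℤ))
      = ∑ j ∈ Finset.Icc 1 e, κ₂ (-(j : ℤ)) * b⁻¹ ^ j :=
    Finset.sum_congr rfl fun j hj => hB j hj
  have hmom'₁ : ∑ j ∈ Finset.Icc 1 f, (j : ℝ) * (κ₂ (j : ℤ) * a ^ j)
      = ∑ j ∈ Finset.Icc 1 e, (j : ℝ) * (κ₂ (-(j : ℤ)) * b⁻¹ ^ j) := by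
    calc ∑ j ∈ Finset.Icc 1 f, (j : ℝ) * (κ₂ (j : ℤ) * a ^ j)
        = ∑ j ∈ Finset.Icc 1 f, (j : ℝ) * κ₁ (j : ℤ) :=
          Finset.sum_congr rfl fun j hj => by rw [hA j hj]
      _ = ∑ j ∈ Finset.Icc 1 e, (j : ℝ) * κ₁ (-(j : ℤ)) := M₁
      _ = ∑ j ∈ Finset.Icc 1 e, (j : ℝ) * (κ₂ (-(j : ℤ)) * b⁻¹ ^ j) :=
          Finset.sum_congr rfl fun j hj => by rw [hB j hj]
  have hsumEq : ∑ j ∈ Finset.Icc 1 f, κ₂ (j : ℤ) * a ^ j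
        + ∑ j ∈ Finset.Icc 1 e, κ₂ (-(j : ℤ)) * b⁻¹ ^ j
      = ∑ j ∈ Finset.Icc 1 f, κ₂ (j : ℤ) + ∑ j ∈ Finset.Icc 1 e, κ₂ (-(j : ℤ)) := by
    rw [← hsumP₁, ← hsumN₁]
    have := S₁
    rw [hconst] at this
    linarith [S₂]
  obtain ⟨C1, C2, C3⟩ := core_lemma f e (fun j => κ₂ (j : ℤ)) (fun j => κ₂ (-(j : ℤ)))
    (fun j => hκ₂ _) (fun j => hκ₂ _) a b⁻¹ ha hb' hsumEq M₂ hmom'₁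
  constructor
  · -- κ₁ = κ₂ everywhere
    intro k
    rcases lt_trichotomy k 0 with hk | hk | hk
    · by_cases hke : -(e : ℤ) ≤ k
      · have hjm : (-k).toNat ∈ Finset.Icc 1 e := by
          simp only [Finset.mem_Icc]; omega
        have hkeq : -(((-k).toNat : ℕ) : ℤ) = k := by omega
        have := (hB _ hjm).trans (C2 _ hjm)
        rwa [hkeq] at this
      · have h1 : κ₁ k = 0 := by
          by_contra hne
          have := hsupp₁ k hne
          simp only [Finset.mem_Icc] at this
          omega
        have h2 : κ₂ k = 0 := by
          by_contra hne
          have := hsupp₂ k hne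
          simp only [Finset.mem_Icc] at this
          omega
        rw [h1, h2]
    · rw [hk]; exact hconst
    · by_cases hkf : k ≤ (f : ℤ)
      · have hjm : k.toNat ∈ Finset.Icc 1 f := by
          simp only [Finset.mem_Icc]; omega
        have hkeq : ((k.toNat : ℕ) : ℤ) = k := by omega
        have := (hA _ hjm).trans (C1 _ hjm)
        rwa [hkeq] at this
      · have h1 : κ₁ k = 0 := by
          by_contra hne
          have := hsupp₁ k hne
          simp only [Finset.mem_Icc] at this
          omega
        have h2 : κ₂ k = 0 := by
          by_contra hne
          have := hsupp₂ k hne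
          simp only [Finset.mem_Icc] at this
          omega
        rw [h1, h2]
  · -- rigidity of the scales
    rintro ⟨k, hk1, hkne⟩ ⟨k', hk1', hkne'⟩
    have hkf : k ≤ (f : ℤ) := by
      have := hsupp₁ k hkne
      simp only [Finset.mem_Icc] at this
      exact this.2
    have hke : -(e : ℤ) ≤ k' := by
      have := hsupp₁ k' hkne'
      simp only [Finset.mem_Icc] at this
      exact this.1
    have hjm : k.toNat ∈ Finset.Icc 1 f := by simp only [Finset.mem_Icc]; omega
    have hjm' : (-k').toNat ∈ Finset.Icc 1 e := by simp only [Finset.mem_Icc]; omega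
    have hkeq : ((k.toNat : ℕ) : ℤ) = k := by omega
    have hkeq' : -(((-k').toNat : ℕ) : ℤ) = k' := by omega
    have hwitP : κ₂ ((k.toNat : ℕ) : ℤ) ≠ 0 := fun h0 => hkne (by
      rw [← hkeq, hA _ hjm, h0, zero_mul])
    have hwitN : κ₂ (-(((-k').toNat : ℕ) : ℤ)) ≠ 0 := fun h0 => hkne' (by
      rw [← hkeq', hB _ hjm', h0, zero_mul])
    obtain ⟨ha1, hb1⟩ := C3 ⟨k.toNat, hjm, hwitP⟩ ⟨(-k').toNat, hjm', hwitN⟩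
    exact ⟨ha1, by rwa [inv_eq_one] at hb1⟩
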